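/- Let b_1, ..., b_n be i.i.d. random variables taking values in {1, 2, ...} with sum b. If D = 0 (i.e., all weighted true gradients coincide: nγ_i∇F_i = ∇F for all i), then the proportional variance bound n²μ₃σ²Σγ_i² is at most the equal-weighting variance bound μ₂σ²Σγ_i², where μ₂ = E[1/b_i] and μ₃ = E[b_i/b²]. -/

import Mathlib

open MeasureTheory ProbabilityTheory

/-- When `D = 0` (all weighted true gradients coincide: `nγᵢ • ∇Fᵢ = ∇F`), the
proportional variance bound `n²μ₃σ²Σγᵢ²` is at most the equal-weighting variance bound
`μ₂σ²Σγᵢ²`, where `μ₂ = E[1/bᵢ]` and `μ₃ = E[bᵢ/b²]` for i.i.d. positive-integer `bᵢ`. -/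
theorem proportional_bound_le_equal_bound_of_D_zero {Ω : Type*} [MeasureSpace Ω]
    [IsProbabilityMeasure (ℙ : Measure Ω)] {d n : ℕ} (hn : 0 < n)
    (b : Fin n → Ω → ℕ)
    (hpos : ∀ i ω, 1 ≤ b i ω)
    (hmeas : ∀ i, Measurable (b i))
    (hindep : iIndepFun b ℙ)
    (hident : ∀ i j, IdentDistrib (b i) (b j) ℙ ℙ)
    (γ : Fin n → ℝ) (hγ : ∀ i, 0 ≤ γ i) (hγsum : ∑ i, γ i = 1)
    (gradFi : Fin n → EuclideanSpace ℝ (Fin d))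
    (hDzero : ∀ i, (n : ℝ) • γ i • gradFi i = ∑ j, γ j • gradFi j)
    (σ2 : ℝ) (hσ2 : 0 < σ2)
    (μ2 μ3 : ℝ)
    (hμ2 : ∀ i, ∫ ω, (1 / (b i ω : ℝ)) ∂ℙ = μ2)
    (hμ3 : ∀ i, ∫ ω, ((b i ω : ℝ) / (∑ j, (b j ω : ℝ)) ^ 2) ∂ℙ = μ3) :
    (n : ℝ) ^ 2 * μ3 * σ2 * (∑ i, (γ i) ^ 2) ≤ μ2 * σ2 * (∑ i, (γ i) ^ 2) := by
  set S : Ω → ℝ := fun ω => ∑ j, (b j ω : ℝ) with hSdef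
  have hb1 : ∀ i ω, (1:ℝ) ≤ (b i ω : ℝ) := fun i ω => by exact_mod_cast hpos i ω
  have hbpos : ∀ i ω, (0:ℝ) < (b i ω : ℝ) := fun i ω => lt_of_lt_of_le one_pos (hb1 i ω)
  have hSn : ∀ ω, (n:ℝ) ≤ S ω := by
    intro ω
    calc (n:ℝ) = ∑ _j : Fin n, (1:ℝ) := by simp
    _ ≤ ∑ j, (b j ω : ℝ) := Finset.sum_le_sum fun j _ => hb1 j ω
  have hS1 : ∀ ω, (1:ℝ) ≤ S ω := fun ω =>
    le_trans (by exact_mod_cast hn) (hSn ω)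
  have hSpos : ∀ ω, 0 < S ω := fun ω => lt_of_lt_of_le one_pos (hS1 ω)
  have hbleS : ∀ i ω, (b i ω : ℝ) ≤ S ω := by
    intro i ω
    exact Finset.single_le_sum (f := fun j => (b j ω : ℝ))
      (fun j _ => le_of_lt (hbpos j ω)) (Finset.mem_univ i)
  -- measurability
  have hmeasR : ∀ i, Measurable (fun ω => (b i ω : ℝ)) := fun i =>
    (measurable_of_countable _).comp (hmeas i)
  have hmeasS : Measurable S := by
    apply Finset.measurable_sum
    exact fun j _ => hmeasR j
  -- integrability helpers
  have hint : ∀ (f : Ω → ℝ), Measurable f → (∀ ω, |f ω| ≤ 1) → Integrable f ℙ := by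
    intro f hf hbd
    exact Integrable.mono' (integrable_const 1) hf.aestronglyMeasurable
      (Filter.Eventually.of_forall fun ω => by simpa using hbd ω)
  have hint3 : ∀ i, Integrable (fun ω => (b i ω : ℝ) / S ω ^ 2) ℙ := by
    intro i
    refine hint _ (Measurable.div (hmeasR i) (hmeasS.pow_const 2)) fun ω => ?_
    rw [abs_of_nonneg (by positivity)]
    rw [div_le_one (pow_pos (hSpos ω) 2)]
    calc (b i ω : ℝ) ≤ S ω := hbleS i ω
    _ ≤ S ω ^ 2 := by nlinarith [hS1 ω]
  have hintinvS : Integrable (fun ω => 1 / S ω) ℙ := by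
    refine hint _ (Measurable.div measurable_const hmeasS) fun ω => ?_
    rw [abs_of_nonneg (by positivity)]
    rw [div_le_one (hSpos ω)]
    exact hS1 ω
  have hint2 : ∀ i, Integrable (fun ω => 1 / (b i ω : ℝ)) ℙ := by
    intro i
    refine hint _ (Measurable.div measurable_const (hmeasR i)) fun ω => ?_
    rw [abs_of_nonneg (by positivity)]
    rw [div_le_one (hbpos i ω)]
    exact hb1 i ω
  -- step 1 : n * μ3 = ∫ 1/S
  have key1 : (n:ℝ) * μ3 = ∫ ω, 1 / S ω ∂ℙ := by
    have : ∑ i : Fin n, ∫ ω, ((b i ω : ℝ) / S ω ^ 2) ∂ℙ = ∫ ω, 1 / S ω ∂ℙ := by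
      rw [← integral_finset_sum _ fun i _ => hint3 i]
      congr 1
      funext ω
      rw [← Finset.sum_div]
      have h0 : S ω ≠ 0 := ne_of_gt (hSpos ω)
      field_simp
      ring
    rw [← this]
    simp only [hSdef, hμ3]
    simp [mul_comm]
  -- step 2 : pointwise Cauchy-Schwarz  n^2 / S ≤ ∑ 1/bᵢ
  have key2 : ∀ ω, (n:ℝ)^2 * (1 / S ω) ≤ ∑ i, 1 / (b i ω : ℝ) := by
    intro ω
    have hcs : ((n:ℝ))^2 ≤ S ω * ∑ i, 1 / (b i ω : ℝ) := by
      have := Finset.sum_sq_le_sum_mul_sum_of_sq_eq_mul (Finset.univ : Finset (Fin n))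
        (r := fun _ => (1:ℝ)) (f := fun i => (b i ω : ℝ)) (g := fun i => 1 / (b i ω : ℝ))
        (fun i _ => le_of_lt (hbpos i ω)) (fun i _ => by positivity)
        (fun i _ => by rw [one_pow, mul_one_div, div_self (ne_of_gt (hbpos i ω))])
      simpa using this
    rw [mul_one_div, div_le_iff₀ (hSpos ω)]
    calc (n:ℝ)^2 ≤ S ω * ∑ i, 1 / (b i ω : ℝ) := hcs
    _ = (∑ i, 1 / (b i ω : ℝ)) * S ω := by ring
  -- step 3 : integrate
  have key3 : (n:ℝ)^2 * ∫ ω, 1 / S ω ∂ℙ ≤ (n:ℝ) * μ2 := by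
    have h1 : (n:ℝ)^2 * ∫ ω, 1 / S ω ∂ℙ = ∫ ω, (n:ℝ)^2 * (1 / S ω) ∂ℙ := by
      rw [integral_const_mul]
    have h2 : ∫ ω, (∑ i, 1 / (b i ω : ℝ)) ∂ℙ = (n:ℝ) * μ2 := by
      rw [integral_finset_sum _ fun i _ => hint2 i]
      simp only [hμ2]
      simp [mul_comm]
    rw [h1, ← h2]
    exact integral_mono (hintinvS.const_mul _)
      (integrable_finset_sum _ fun i _ => hint2 i) key2
  -- combine
  have hnpos : (0:ℝ) < n := by exact_mod_cast hn
  have hkey : (n:ℝ)^2 * μ3 ≤ μ2 := by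
    have : (n:ℝ) * ((n:ℝ)^2 * μ3) ≤ (n:ℝ) * μ2 := by
      calc (n:ℝ) * ((n:ℝ)^2 * μ3) = (n:ℝ)^2 * ((n:ℝ) * μ3) := by ring
      _ = (n:ℝ)^2 * ∫ ω, 1 / S ω ∂ℙ := by rw [key1]
      _ ≤ (n:ℝ) * μ2 := key3
    exact le_of_mul_le_mul_left this hnpos
  have hnn : (0:ℝ) ≤ σ2 * ∑ i, (γ i)^2 := by positivity
  nlinarith [mul_le_mul_of_nonneg_right hkey hnn]
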